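/- In the algebra U with K = f_{q^{1/2}}, the elements H = (2/(q−q^{-1}))(K^{-2} − 1), X = q^{1/2} F K^{-1}, Y = q^{1/2} K^{-1} E satisfy: q^{-1}HX − qXH = 2X, qHY − q^{-1}YH = −2Y, and qXY − q^{-1}YX − ((q−q^{-1})/4)H² = H. -/

import Mathlib

set_option maxHeartbeats 1600000

/-- In `U` with `K' = K⁻¹`, the elements `H = (2/(q−q⁻¹))(K⁻²−1)`,
`X = q^{1/2}FK⁻¹`, `Y = q^{1/2}K⁻¹E` (here `s = q^{1/2}`) satisfy the relations of
calculus 4: `q⁻¹HX − qXH = 2X`, `qHY − q⁻¹YH = −2Y`,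
`qXY − q⁻¹YX − ((q−q⁻¹)/4)H² = H`. -/
theorem stmt12 {A : Type*} [Ring A] [Algebra ℂ A]
    (q s : ℂ) (hs : s ^ 2 = q) (hq0 : q ≠ 0)
    (hroot : ∀ n : ℕ, 0 < n → q ^ n ≠ 1)
    (E F K K' : A)
    (hKK' : K * K' = 1) (hK'K : K' * K = 1)
    (hKE : K * E = q • (E * K)) (hKF : K * F = q⁻¹ • (F * K))
    (hEF : E * F - F * E = (q - q⁻¹)⁻¹ • (K ^ 2 - K' ^ 2)) :
    let H := (2 * (q - q⁻¹)⁻¹) • (K' ^ 2 - 1)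
    let X := s • (F * K')
    let Y := s • (K' * E)
    q⁻¹ • (H * X) - q • (X * H) = (2 : ℂ) • X ∧
    q • (H * Y) - q⁻¹ • (Y * H) = (-2 : ℂ) • Y ∧
    q • (X * Y) - q⁻¹ • (Y * X) - ((q - q⁻¹) / 4) • (H * H) = H := by
  intro H X Y
  have h21 : q ^ 2 - 1 ≠ 0 := sub_ne_zero.mpr (hroot 2 two_pos)
  have ha : (-1 + q ^ 2) ≠ 0 := by intro h; exact h21 (by linear_combination h)
  have hb : (-q + q ^ 3) ≠ 0 := by
    have h : -q + q ^ 3 = q * (-1 + q ^ 2) := by ring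
    rw [h]; exact mul_ne_zero hq0 ha
  have hqq : q * q - 1 ≠ 0 := by intro h; exact h21 (by linear_combination h)
  have hd : q - q⁻¹ ≠ 0 := by
    intro h
    apply h21
    have : q * (q - q⁻¹) = q ^ 2 - 1 := by field_simp
    rw [h, mul_zero] at this
    exact this.symm
  have r3 : ∀ t : A, K' * (K * t) = t := fun t => by rw [← mul_assoc, hK'K, one_mul]
  have r4 : ∀ t : A, K * (K' * t) = t := fun t => by rw [← mul_assoc, hKK', one_mul]
  have hFK : F * K = q • (K * F) := by
    rw [hKF, smul_smul, mul_inv_cancel₀ hq0, one_smul]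
  have hK'F : K' * F = q • (F * K') := by
    have h := congrArg (fun x => K' * x * K') hFK
    simp only [mul_smul_comm, smul_mul_assoc, mul_assoc] at h
    rw [hKK', mul_one, r3] at h
    exact h
  have hEK' : E * K' = q • (K' * E) := by
    have h := congrArg (fun x => K' * x * K') hKE
    simp only [mul_smul_comm, smul_mul_assoc, mul_assoc] at h
    rw [r3, hKK', mul_one] at h
    exact h
  have hEF' : E * F = F * E + (q - q⁻¹)⁻¹ • (K * K) - (q - q⁻¹)⁻¹ • (K' * K') := by
    have h := hEF
    rw [sub_eq_iff_eq_add, pow_two, pow_two, smul_sub] at h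
    rw [h]; abel
  have r1 : ∀ t : A, K' * (F * t) = q • (F * (K' * t)) := fun t => by
    rw [← mul_assoc, hK'F, smul_mul_assoc, mul_assoc]
  have r2 : ∀ t : A, E * (K' * t) = q • (K' * (E * t)) := fun t => by
    rw [← mul_assoc, hEK', smul_mul_assoc, mul_assoc]
  have r5 : ∀ t : A, E * (F * t) = F * (E * t)
      + (q - q⁻¹)⁻¹ • (K * (K * t)) - (q - q⁻¹)⁻¹ • (K' * (K' * t)) := fun t => by
    rw [← mul_assoc, hEF', sub_mul, add_mul, smul_mul_assoc, smul_mul_assoc,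
      mul_assoc, mul_assoc, mul_assoc]
  refine ⟨?_, ?_, ?_⟩
  · show q⁻¹ • (((2 * (q - q⁻¹)⁻¹) • (K' ^ 2 - 1)) * (s • (F * K')))
        - q • ((s • (F * K')) * ((2 * (q - q⁻¹)⁻¹) • (K' ^ 2 - 1))) = (2 : ℂ) • (s • (F * K'))
    simp only [pow_two, mul_sub, sub_mul, mul_add, add_mul, smul_add, mul_one, one_mul, smul_mul_assoc,
      mul_smul_comm, mul_assoc, r1, r2, r3, r4, hK'F, hEK', hKK', hK'K, smul_sub, smul_smul]
    match_scalars <;> field_simp <;> ring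
  · show q • (((2 * (q - q⁻¹)⁻¹) • (K' ^ 2 - 1)) * (s • (K' * E)))
        - q⁻¹ • ((s • (K' * E)) * ((2 * (q - q⁻¹)⁻¹) • (K' ^ 2 - 1))) = (-2 : ℂ) • (s • (K' * E))
    simp only [pow_two, mul_sub, sub_mul, mul_add, add_mul, smul_add, mul_one, one_mul, smul_mul_assoc,
      mul_smul_comm, mul_assoc, r1, r2, r3, r4, hK'F, hEK', hKK', hK'K, smul_sub, smul_smul]
    match_scalars <;> field_simp <;> ring
  · show q • ((s • (F * K')) * (s • (K' * E))) - q⁻¹ • ((s • (K' * E)) * (s • (F * K')))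
        - ((q - q⁻¹) / 4) • (((2 * (q - q⁻¹)⁻¹) • (K' ^ 2 - 1)) * ((2 * (q - q⁻¹)⁻¹) • (K' ^ 2 - 1)))
        = (2 * (q - q⁻¹)⁻¹) • (K' ^ 2 - 1)
    simp only [pow_two, mul_sub, sub_mul, mul_add, add_mul, smul_add, mul_one, one_mul, smul_mul_assoc,
      mul_smul_comm, mul_assoc, r5, r1, r2, r3, r4, hK'F, hEK', hKK', hK'K,
      smul_sub, smul_smul]
    match_scalars
    · field_simp
      ring
    · field_simp
      linear_combination (-4) * hs
    · field_simp
      linear_combination 4 * hs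
    · field_simp
      ring
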